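/- Let M and X be d×d real symmetric positive-definite matrices, let S_1 and S_2 be d×d real symmetric matrices, and let L be the solution of the Lyapunov equation X·L + L·X = S_1. Then L' = M^{-1/2}·L·M^{-1/2} solves the generalized Lyapunov equation (M^{1/2}·X·M^{1/2})·L'·M + M·L'·(M^{1/2}·X·M^{1/2}) = M^{1/2}·S_1·M^{1/2}, and tr(L' · (M^{1/2}·S_2·M^{1/2})) = tr(L·S_2). Hence the map φ(X) = M^{1/2}·X·M^{1/2}, whose differential sends S to M^{1/2}·S·M^{1/2}, pulls the generalized Bures–Wasserstein inner product with parameter M back to the Bures–Wasserstein inner product. -/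

import Mathlib

open Matrix
open scoped Classical

/-- The unique positive semidefinite square root of a positive semidefinite matrix
(in particular the unique positive-definite square root of a positive-definite matrix);
junk value `0` otherwise. -/
noncomputable def sqrtm {d : ℕ} (X : Matrix (Fin d) (Fin d) ℝ) : Matrix (Fin d) (Fin d) ℝ :=
  if h : X.PosSemidef then
    (h.1.eigenvectorUnitary : Matrix (Fin d) (Fin d) ℝ) *
      diagonal ((↑) ∘ (√·) ∘ h.1.eigenvalues) *
      (star h.1.eigenvectorUnitary : Matrix (Fin d) (Fin d) ℝ)
  else 0

/-- For symmetric positive-definite `M`, `X`, symmetric `S_1`, `S_2`, and `L` solving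
`X·L + L·X = S_1`, the matrix `L' = M^{-1/2}·L·M^{-1/2}` solves the generalized Lyapunov
equation `(M^{1/2}XM^{1/2})·L'·M + M·L'·(M^{1/2}XM^{1/2}) = M^{1/2}S_1M^{1/2}`, and
`tr(L'·(M^{1/2}S_2M^{1/2})) = tr(L·S_2)`: the map `φ(X) = M^{1/2}XM^{1/2}` pulls the
generalized Bures–Wasserstein inner product with parameter `M` back to the
Bures–Wasserstein inner product. -/
theorem stmt_7 {d : ℕ} (M X : Matrix (Fin d) (Fin d) ℝ) (hM : M.PosDef) (hX : X.PosDef)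
    (S₁ S₂ : Matrix (Fin d) (Fin d) ℝ) (hS₁ : S₁ᵀ = S₁) (hS₂ : S₂ᵀ = S₂)
    (L : Matrix (Fin d) (Fin d) ℝ) (hL : X * L + L * X = S₁) :
    (sqrtm M * X * sqrtm M) * ((sqrtm M)⁻¹ * L * (sqrtm M)⁻¹) * M +
        M * ((sqrtm M)⁻¹ * L * (sqrtm M)⁻¹) * (sqrtm M * X * sqrtm M) =
      sqrtm M * S₁ * sqrtm M ∧
    (((sqrtm M)⁻¹ * L * (sqrtm M)⁻¹) * (sqrtm M * S₂ * sqrtm M)).trace = (L * S₂).trace := by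
  have hps := hM.posSemidef
  have hR : sqrtm M = (hps.1.eigenvectorUnitary : Matrix (Fin d) (Fin d) ℝ) *
      diagonal ((↑) ∘ (√·) ∘ hps.1.eigenvalues) *
      (star hps.1.eigenvectorUnitary : Matrix (Fin d) (Fin d) ℝ) := dif_pos hps
  set R := sqrtm M with hRdef
  have hRR : R * R = M := by
    rw [hR]
    conv_rhs => rw [hps.1.spectral_theorem, Unitary.conjStarAlgAut_apply]
    have hU : (star hps.1.eigenvectorUnitary : Matrix (Fin d) (Fin d) ℝ) *
        (hps.1.eigenvectorUnitary : Matrix (Fin d) (Fin d) ℝ) = 1 := by simp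
    have hD : diagonal ((↑) ∘ (√·) ∘ hps.1.eigenvalues) *
        diagonal ((↑) ∘ (√·) ∘ hps.1.eigenvalues) =
        diagonal (RCLike.ofReal ∘ hps.1.eigenvalues : Fin d → ℝ) := by
      rw [diagonal_mul_diagonal]; congr 1; funext i
      simp [Real.mul_self_sqrt (hps.eigenvalues_nonneg i)]
    rw [← hD]
    simp only [mul_assoc]
    rw [← mul_assoc (star _ : Matrix (Fin d) (Fin d) ℝ) _ _, hU, one_mul]
  have hdet : IsUnit R.det := by
    have : R.det * R.det = M.det := by rw [← det_mul, hRR]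
    have hMdet : M.det ≠ 0 := hM.det_pos.ne'
    exact isUnit_iff_ne_zero.2 (fun h => hMdet (by rw [← this, h, zero_mul]))
  have hinv : R⁻¹ * R = 1 := nonsing_inv_mul R hdet
  have hinv' : R * R⁻¹ = 1 := mul_nonsing_inv R hdet
  have hRM : R⁻¹ * M = R := by rw [← hRR, ← mul_assoc, hinv, one_mul]
  have hMR : M * R⁻¹ = R := by rw [← hRR, mul_assoc, hinv', mul_one]
  constructor
  · have e1 : (R * X * R) * (R⁻¹ * L * R⁻¹) * M = R * (X * L) * R := by
      calc (R * X * R) * (R⁻¹ * L * R⁻¹) * M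
          = R * X * (R * R⁻¹) * L * (R⁻¹ * M) := by noncomm_ring
        _ = R * (X * L) * R := by rw [hinv', hRM]; noncomm_ring
    have e2 : M * (R⁻¹ * L * R⁻¹) * (R * X * R) = R * (L * X) * R := by
      calc M * (R⁻¹ * L * R⁻¹) * (R * X * R)
          = (M * R⁻¹) * L * (R⁻¹ * R) * X * R := by noncomm_ring
        _ = R * (L * X) * R := by rw [hinv, hMR]; noncomm_ring
    rw [e1, e2, ← hL]; noncomm_ring
  · have : (R⁻¹ * L * R⁻¹) * (R * S₂ * R) = R⁻¹ * (L * S₂) * R := by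
      calc (R⁻¹ * L * R⁻¹) * (R * S₂ * R)
          = R⁻¹ * L * (R⁻¹ * R) * S₂ * R := by noncomm_ring
        _ = R⁻¹ * (L * S₂) * R := by rw [hinv]; noncomm_ring
    rw [this, trace_mul_cycle, ← mul_assoc, hinv', one_mul]
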